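/- Let σ = (i₁,...,iₙ) ∈ 𝔖 with iₙ = 1, set u(σ) = Σⱼ₌₁^{n−1} iⱼ/3ʲ, and for each k let τₖ be the concatenation of (i₁,...,i_{n−1}) with the length-k sequence (0,2,2,...,2). Then τₖ ∈ 𝔖 and the sequence (v(τₖ))ₖ converges to v(σ). -/

import Mathlib

/-- Membership in `𝔖`: a nonempty finite sequence over `{0,1,2}` whose last
entry is nonzero and whose non-final entries are never `1`. -/
def Sgood (l : List ℕ) : Prop :=
  l ≠ [] ∧ (∀ x ∈ l, x ≤ 2) ∧ l.getD (l.length - 1) 0 ≠ 0 ∧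
    ∀ j, j < l.length - 1 → l.getD j 0 ≠ 1

/-- `v(σ) = ∑_{j=1}^{n} i_j / 3^j`. -/
noncomputable def vval (l : List ℕ) : ℝ :=
  ∑ j ∈ Finset.range l.length, (l.getD j 0 : ℝ) / 3 ^ (j + 1)

/-- `u(σ) = ∑_{j=1}^{n-1} i_j / 3^j`. -/
noncomputable def uval (l : List ℕ) : ℝ :=
  ∑ j ∈ Finset.range (l.length - 1), (l.getD j 0 : ℝ) / 3 ^ (j + 1)

/-- `a_{σ,k} = v(σ) - (-1)^{i_n} / (k · 3^{n+1})`. -/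
noncomputable def aval (l : List ℕ) (k : ℕ) : ℝ :=
  vval l - (-1 : ℝ) ^ (l.getD (l.length - 1) 0) / (k * 3 ^ (l.length + 1))

lemma vval_cons (x : ℕ) (t : List ℕ) : vval (x :: t) = x / 3 + vval t / 3 := by
  unfold vval
  rw [List.length_cons, Finset.sum_range_succ']
  simp only [List.getD_cons_succ, List.getD_cons_zero]
  rw [Finset.sum_div, add_comm]
  congr 1
  · norm_num
  · apply Finset.sum_congr rfl; intro j _; rw [pow_succ]; ring

lemma vval_append (a b : List ℕ) : vval (a ++ b) = vval a + vval b / 3 ^ a.length := by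
  induction a with
  | nil => simp [vval]
  | cons x t ih =>
    rw [List.cons_append, vval_cons, ih, vval_cons, List.length_cons, pow_succ]
    ring

lemma vval_replicate (m : ℕ) : vval (List.replicate m 2) = 1 - (1 / 3 : ℝ) ^ m := by
  induction m with
  | zero => simp [vval]
  | succ m ih =>
    rw [List.replicate_succ, vval_cons, ih]
    push_cast
    ring

lemma getD_last (l : List ℕ) (h : l ≠ []) : l.getD (l.length - 1) 0 = l.getLast h := by
  rw [List.getLast_eq_getElem, List.getD_eq_getElem]

lemma replicate_getD_ne_one (m i : ℕ) : (List.replicate m 2).getD i 0 ≠ 1 := by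
  rcases lt_or_ge i m with h | h
  · rw [List.getD_eq_getElem _ _ (by simpa using h)]; simp
  · rw [List.getD_eq_default]
    · simp
    · simpa using h

theorem stmt_15 (l : List ℕ) (hl : Sgood l) (hlast : l.getD (l.length - 1) 0 = 1)
    (τ : ℕ → List ℕ)
    (hτ : ∀ k, τ k = l.dropLast ++ (0 :: List.replicate (k - 1) 2)) :
    (∀ k, 2 ≤ k → Sgood (τ k)) ∧
      Filter.Tendsto (fun k => vval (τ k)) Filter.atTop (nhds (vval l)) := by
  obtain ⟨hne, hle2, hlast0, hmid⟩ := hl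
  have hn : 1 ≤ l.length := List.length_pos_iff.mpr hne
  have hdll : l.dropLast.length = l.length - 1 := List.length_dropLast
  -- value of l in terms of dropLast
  have hsplit : vval l = vval l.dropLast + 1 / 3 ^ l.length := by
    conv_lhs => rw [← List.dropLast_append_getLast hne]
    rw [vval_append, hdll]
    congr 1
    have : l.getLast hne = 1 := by rw [← getD_last l hne, hlast]
    rw [this]
    have h3 : (3 : ℝ) ^ l.length = 3 ^ (l.length - 1) * 3 := by
      rw [← pow_succ]
      congr 1
      omega
    simp [vval, h3]
    ring
  constructor
  · intro k hk
    rw [hτ k]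
    have hrepne : (List.replicate (k - 1) 2 : List ℕ) ≠ [] := by
      simp [List.replicate_eq_nil_iff]
      omega
    refine ⟨by simp, ?_, ?_, ?_⟩
    · intro x hx
      rcases List.mem_append.1 hx with h | h
      · exact hle2 x (List.dropLast_subset l h)
      · rcases List.mem_cons.1 h with h | h
        · omega
        · rw [List.eq_of_mem_replicate h]
    · rw [getD_last _ (by simp), List.getLast_append_right (by simp),
        List.getLast_cons hrepne, List.getLast_replicate]
      norm_num
    · intro j hj
      simp only [List.length_append, List.length_cons, List.length_replicate, hdll] at hj
      rcases lt_or_ge j (l.length - 1) with h | h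
      · rw [List.getD_append _ _ _ _ (by omega)]
        rw [show l.dropLast.getD j 0 = l.getD j 0 by
          rw [List.getD_eq_getElem _ _ (by rw [hdll]; omega),
            List.getD_eq_getElem _ _ (by omega : j < l.length), List.getElem_dropLast]]
        exact hmid j h
      · rw [List.getD_append_right _ _ _ _ (by omega)]
        rcases Nat.eq_zero_or_pos (j - l.dropLast.length) with h0 | h0
        · rw [h0]; simp
        · obtain ⟨i, hi⟩ := Nat.exists_eq_succ_of_ne_zero (Nat.pos_iff_ne_zero.mp h0)
          rw [hi, List.getD_cons_succ]
          exact replicate_getD_ne_one _ _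
  · have key : ∀ k, vval (τ k) = vval l - (1 / 3 : ℝ) ^ (k - 1) / 3 ^ l.length := by
      intro k
      rw [hτ k, vval_append, vval_cons, vval_replicate, hdll, hsplit]
      have h3 : (3 : ℝ) ^ l.length = 3 ^ (l.length - 1) * 3 := by
        rw [← pow_succ]; congr 1; omega
      rw [h3]
      push_cast
      ring
    have h1 : Filter.Tendsto (fun k : ℕ => (1 / 3 : ℝ) ^ (k - 1)) Filter.atTop (nhds 0) := by
      exact (tendsto_pow_atTop_nhds_zero_of_lt_one (by norm_num) (by norm_num)).comp
        (Filter.tendsto_sub_atTop_nat 1)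
    have h2 := (h1.div_const ((3 : ℝ) ^ l.length)).const_sub (vval l)
    simp only [zero_div, sub_zero] at h2
    simpa only [key] using h2
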